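/- arXiv:2102.05858 — 2 statements merged into one kernel-verified Lean document; each statement's English description precedes it below -/
import Mathlib

section
/- Let X be a finite subset of ℝ^d that spans ℝ^d and let θ ∈ ℝ^d define a stochastic instance with unique optimal arm x*, gaps Δ_x, and instance-optimal constant c(X, θ). Then there exists N* : X → [0,∞), taking only finite values, such that H(N*) = Σ_{x∈X} N*_x x xᵀ is invertible, xᵀ H(N*)^{-1} x ≤ Δ_x²/2 for every x ∈ X \ {x*}, and Σ_{x∈X} N*_x Δ_x ≤ 2·c(X, θ). -/
open Finset

/-- `Smat X N` is the matrix `H(N) = ∑_{x ∈ X} N_x · x xᵀ`. -/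
noncomputable def Smat {d : ℕ} (X : Finset (Fin d → ℝ)) (N : (Fin d → ℝ) → ℝ) :
    Matrix (Fin d) (Fin d) ℝ :=
  ∑ x ∈ X, N x • Matrix.vecMulVec x x

/-- The set of objective values `∑_{x ≠ x*} N_x Δ_x` attained by feasible allocations `N`
in the lower-bound optimization problem; its infimum is `c(X, θ)`. -/
def lowerBoundObjValues {d : ℕ} (X : Finset (Fin d → ℝ)) (xstar : Fin d → ℝ)
    (Δ : (Fin d → ℝ) → ℝ) : Set ℝ :=
  {v : ℝ | ∃ N : (Fin d → ℝ) → ℝ, (∀ x ∈ X, 0 ≤ N x) ∧ IsUnit (Smat X N) ∧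
    (∀ x ∈ X, x ≠ xstar →
      dotProduct x ((Smat X N)⁻¹.mulVec x) ≤ Δ x ^ 2 / 2) ∧
    v = ∑ x ∈ X.erase xstar, N x * Δ x}

section Aux

open Matrix

lemma aux_sum_mulVec {d : ℕ} {ι : Type*} (s : Finset ι) (A : ι → Matrix (Fin d) (Fin d) ℝ)
    (v : Fin d → ℝ) : (∑ i ∈ s, A i).mulVec v = ∑ i ∈ s, (A i).mulVec v := by
  ext j
  simp only [Matrix.mulVec, dotProduct, Finset.sum_apply, Matrix.sum_apply,
    Finset.sum_mul]
  rw [Finset.sum_comm]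

lemma aux_vecMulVec_mulVec {d : ℕ} (x v : Fin d → ℝ) :
    (Matrix.vecMulVec x x).mulVec v = (x ⬝ᵥ v) • x := by
  ext i
  simp only [Matrix.mulVec, dotProduct, Matrix.vecMulVec_apply, Pi.smul_apply,
    smul_eq_mul, Finset.sum_mul, Finset.mul_sum]
  exact Finset.sum_congr rfl fun j _ => by ring

lemma aux_dotProduct_sum {d : ℕ} {ι : Type*} (s : Finset ι) (u : Fin d → ℝ)
    (f : ι → (Fin d → ℝ)) : u ⬝ᵥ (∑ i ∈ s, f i) = ∑ i ∈ s, u ⬝ᵥ f i := by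
  simp only [dotProduct, Finset.sum_apply, Finset.mul_sum]
  rw [Finset.sum_comm]

lemma Smat_mulVec {d : ℕ} (X : Finset (Fin d → ℝ)) (N : (Fin d → ℝ) → ℝ) (v : Fin d → ℝ) :
    (Smat X N).mulVec v = ∑ x ∈ X, (N x * (x ⬝ᵥ v)) • x := by
  unfold Smat
  rw [aux_sum_mulVec]
  refine Finset.sum_congr rfl fun x _ => ?_
  rw [Matrix.smul_mulVec, aux_vecMulVec_mulVec, smul_smul]

lemma Smat_bilin {d : ℕ} (X : Finset (Fin d → ℝ)) (N : (Fin d → ℝ) → ℝ) (u v : Fin d → ℝ) :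
    u ⬝ᵥ (Smat X N).mulVec v = ∑ x ∈ X, N x * ((x ⬝ᵥ u) * (x ⬝ᵥ v)) := by
  rw [Smat_mulVec, aux_dotProduct_sum]
  refine Finset.sum_congr rfl fun x _ => ?_
  rw [dotProduct_smul, smul_eq_mul, dotProduct_comm u x]
  ring

lemma Smat_quad_nonneg {d : ℕ} {X : Finset (Fin d → ℝ)} {N : (Fin d → ℝ) → ℝ}
    (hN : ∀ x ∈ X, 0 ≤ N x) (v : Fin d → ℝ) : 0 ≤ v ⬝ᵥ (Smat X N).mulVec v := by
  rw [Smat_bilin]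
  exact Finset.sum_nonneg fun x hx => mul_nonneg (hN x hx) (mul_self_nonneg _)

lemma Smat_isHermitian {d : ℕ} (X : Finset (Fin d → ℝ)) (N : (Fin d → ℝ) → ℝ) :
    (Smat X N).IsHermitian := by
  show (Smat X N)ᴴ = Smat X N
  ext i j
  simp only [Smat, Matrix.conjTranspose_apply, Matrix.sum_apply, Matrix.smul_apply,
    Matrix.vecMulVec_apply, smul_eq_mul, star_trivial]
  exact Finset.sum_congr rfl fun x _ => by ring

lemma Smat_posDef {d : ℕ} {X : Finset (Fin d → ℝ)} {N : (Fin d → ℝ) → ℝ}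
    (hN : ∀ x ∈ X, 0 ≤ N x)
    (hpos : ∀ v : Fin d → ℝ, v ≠ 0 → ∃ x ∈ X, N x ≠ 0 ∧ x ⬝ᵥ v ≠ 0) :
    (Smat X N).PosDef := by
  refine Matrix.PosDef.of_dotProduct_mulVec_pos (Smat_isHermitian X N) fun v hv => ?_
  rw [star_trivial, Smat_bilin]
  obtain ⟨x0, hx0X, hNx0, hx0v⟩ := hpos v hv
  refine Finset.sum_pos' (fun x hx => mul_nonneg (hN x hx) (mul_self_nonneg _)) ⟨x0, hx0X, ?_⟩
  exact mul_pos ((hN x0 hx0X).lt_of_ne (Ne.symm hNx0)) (mul_self_pos.mpr hx0v)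

lemma Smat_symm {d : ℕ} (X : Finset (Fin d → ℝ)) (N : (Fin d → ℝ) → ℝ) (u v : Fin d → ℝ) :
    u ⬝ᵥ (Smat X N).mulVec v = v ⬝ᵥ (Smat X N).mulVec u := by
  rw [Smat_bilin, Smat_bilin]
  exact Finset.sum_congr rfl fun x _ => by ring

lemma Smat_cauchySchwarz {d : ℕ} {X : Finset (Fin d → ℝ)} {N : (Fin d → ℝ) → ℝ}
    (hN : ∀ x ∈ X, 0 ≤ N x) (u v : Fin d → ℝ) :
    (u ⬝ᵥ (Smat X N).mulVec v) ^ 2 ≤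
      (u ⬝ᵥ (Smat X N).mulVec u) * (v ⬝ᵥ (Smat X N).mulVec v) := by
  set a := v ⬝ᵥ (Smat X N).mulVec v with ha
  set q := u ⬝ᵥ (Smat X N).mulVec v with hq
  set cc := u ⬝ᵥ (Smat X N).mulVec u with hcc
  have key : ∀ t : ℝ, 0 ≤ a * (t * t) + (2 * q) * t + cc := by
    intro t
    have expand : (u + t • v) ⬝ᵥ (Smat X N).mulVec (u + t • v)
        = a * (t * t) + (2 * q) * t + cc := by
      rw [Matrix.mulVec_add, Matrix.mulVec_smul, add_dotProduct,
        smul_dotProduct, dotProduct_add, dotProduct_add,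
        dotProduct_smul, dotProduct_smul]
      have hsym : v ⬝ᵥ (Smat X N).mulVec u = q := Smat_symm X N v u
      simp only [smul_eq_mul]
      rw [hsym, ← ha, ← hq, ← hcc]
      ring
    rw [← expand]
    exact Smat_quad_nonneg hN _
  have hd := discrim_le_zero key
  rw [discrim] at hd
  nlinarith [hd]

lemma aux_arith {t r D : ℝ} (ht : 0 < t) (hD : 0 < D) (h : 2 * r / D ≤ t) :
    t⁻¹ * r ≤ D / 2 := by
  rw [div_le_iff₀ hD] at h
  rw [inv_mul_eq_div, div_le_iff₀ ht]
  nlinarith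

end Aux

open Matrix

/-- there is a finite-valued allocation `N*` feasible for the lower-bound
optimization problem whose objective value is at most `2·c(X, θ)`. -/
theorem exists_finite_near_optimal_allocation {d : ℕ} (X : Finset (Fin d → ℝ))
    (hspan : Submodule.span ℝ (↑X : Set (Fin d → ℝ)) = ⊤)
    (θ : Fin d → ℝ) (xstar : Fin d → ℝ) (hxstar : xstar ∈ X)
    (hopt : ∀ x ∈ X, x ≠ xstar → dotProduct xstar θ < dotProduct x θ)
    (Δ : (Fin d → ℝ) → ℝ) (hΔdef : ∀ x, Δ x = dotProduct (x - xstar) θ)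
    (c : ℝ) (hc : c = sInf (lowerBoundObjValues X xstar Δ)) :
    ∃ N : (Fin d → ℝ) → ℝ, (∀ x ∈ X, 0 ≤ N x) ∧ IsUnit (Smat X N) ∧
      (∀ x ∈ X, x ≠ xstar →
        dotProduct x ((Smat X N)⁻¹.mulVec x) ≤ Δ x ^ 2 / 2) ∧
      ∑ x ∈ X, N x * Δ x ≤ 2 * c := by
  classical
  set S := lowerBoundObjValues X xstar Δ with hS
  have hΔ0 : Δ xstar = 0 := by rw [hΔdef]; simp
  have hΔpos : ∀ x ∈ X, x ≠ xstar → 0 < Δ x := by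
    intro x hx hne
    rw [hΔdef, sub_dotProduct]
    exact sub_pos.mpr (hopt x hx hne)
  have hker : ∀ v : Fin d → ℝ, (∀ x ∈ X, dotProduct x v = 0) → v = 0 := by
    intro v hv
    let f : (Fin d → ℝ) →ₗ[ℝ] ℝ :=
      { toFun := fun u => dotProduct u v
        map_add' := fun a b => add_dotProduct a b v
        map_smul' := fun m a => by simp [smul_dotProduct] }
    have hle : Submodule.span ℝ (X : Set (Fin d → ℝ)) ≤ LinearMap.ker f :=
      Submodule.span_le.mpr fun x hx => by
        simpa [f, LinearMap.mem_ker] using hv x hx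
    rw [hspan, top_le_iff] at hle
    have hfv : f v = 0 := by
      have hm : v ∈ LinearMap.ker f := by rw [hle]; trivial
      exact LinearMap.mem_ker.mp hm
    exact dotProduct_self_eq_zero.mp hfv
  have hSnonneg : ∀ v ∈ S, 0 ≤ v := by
    rintro v ⟨N, hN0, -, -, rfl⟩
    exact Finset.sum_nonneg fun x hx =>
      mul_nonneg (hN0 x (Finset.mem_of_mem_erase hx))
        (hΔpos x (Finset.mem_of_mem_erase hx) (Finset.ne_of_mem_erase hx)).le
  have hc0 : 0 ≤ c := hc ▸ Real.sInf_nonneg hSnonneg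
  -- S is nonempty: a large constant allocation is feasible
  have hSne : S.Nonempty := by
    set M := Smat X (fun _ => (1 : ℝ)) with hM
    have hMpd : M.PosDef := by
      refine Smat_posDef (fun x _ => zero_le_one) fun v hv => ?_
      by_contra h
      push_neg at h
      exact hv (hker v fun x hx => by
        by_contra hne
        exact hne (by
          have := h x hx
          by_contra h2
          exact h2 (by simpa using this one_ne_zero)))
    have hMdet : IsUnit M.det := (Matrix.isUnit_iff_isUnit_det M).mp hMpd.isUnit
    set t : ℝ := 1 + ∑ x ∈ X.erase xstar, max 0 (2 * (x ⬝ᵥ M⁻¹.mulVec x) / Δ x ^ 2) with ht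
    have hsum0 : 0 ≤ ∑ x ∈ X.erase xstar, max 0 (2 * (x ⬝ᵥ M⁻¹.mulVec x) / Δ x ^ 2) :=
      Finset.sum_nonneg fun x _ => le_max_left 0 _
    have htpos : 0 < t := by rw [ht]; linarith
    have hSmatEq : Smat X (fun _ => t) = t • M := by
      rw [hM]
      unfold Smat
      rw [Finset.smul_sum]
      exact Finset.sum_congr rfl fun x _ => by rw [smul_smul, mul_one]
    have hunit : IsUnit (Smat X (fun _ => t)) := by
      rw [hSmatEq, Matrix.isUnit_iff_isUnit_det, Matrix.det_smul, isUnit_iff_ne_zero]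
      exact mul_ne_zero (pow_ne_zero _ htpos.ne') hMpd.det_pos.ne'
    have hinv : (Smat X (fun _ => t))⁻¹ = t⁻¹ • M⁻¹ := by
      rw [hSmatEq]
      refine Matrix.inv_eq_right_inv ?_
      rw [Matrix.smul_mul, Matrix.mul_smul, smul_smul, mul_inv_cancel₀ htpos.ne',
        one_smul, Matrix.mul_nonsing_inv _ hMdet]
    refine ⟨∑ x ∈ X.erase xstar, t * Δ x, fun _ => t, fun _ _ => htpos.le, hunit, ?_, rfl⟩
    intro x hx hne
    rw [hinv, Matrix.smul_mulVec, dotProduct_smul, smul_eq_mul]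
    set r := x ⬝ᵥ M⁻¹.mulVec x with hr
    have hΔx := hΔpos x hx hne
    have hΔ2 : 0 < Δ x ^ 2 := pow_pos hΔx 2
    have hxmem : x ∈ X.erase xstar := Finset.mem_erase.mpr ⟨hne, hx⟩
    have hterm : 2 * r / Δ x ^ 2 ≤ t := by
      rw [ht]
      have h1 : max 0 (2 * r / Δ x ^ 2) ≤
          ∑ y ∈ X.erase xstar, max 0 (2 * (y ⬝ᵥ M⁻¹.mulVec y) / Δ y ^ 2) :=
        Finset.single_le_sum (f := fun y => max 0 (2 * (y ⬝ᵥ M⁻¹.mulVec y) / Δ y ^ 2))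
          (fun y _ => le_max_left 0 _) hxmem
      have h2 : 2 * r / Δ x ^ 2 ≤ max 0 (2 * r / Δ x ^ 2) := le_max_right 0 _
      linarith
    exact aux_arith htpos hΔ2 hterm
  -- Main case split
  by_cases hA : ∀ x ∈ X, ∃ a : ℝ, x = a • xstar
  · -- Case A: all arms are multiples of xstar
    set α : (Fin d → ℝ) → ℝ := fun x => if h : ∃ a : ℝ, x = a • xstar then h.choose else 0
      with hα
    have hαspec : ∀ x ∈ X, x = α x • xstar := by
      intro x hx
      have h := hA x hx
      simp only [hα, dif_pos h]
      exact h.choose_spec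
    set T : ℝ := 1 + ∑ x ∈ X.erase xstar, max 0 (2 * (α x) ^ 2 / Δ x ^ 2) with hT
    have hsum0 : 0 ≤ ∑ x ∈ X.erase xstar, max 0 (2 * (α x) ^ 2 / Δ x ^ 2) :=
      Finset.sum_nonneg fun x _ => le_max_left 0 _
    have hTpos : 0 < T := by rw [hT]; linarith
    set N : (Fin d → ℝ) → ℝ := fun x => if x = xstar then T else 0 with hN
    have hN0 : ∀ x ∈ X, 0 ≤ N x := by
      intro x _
      rw [hN]
      by_cases h : x = xstar
      · simp [h, hTpos.le]
      · simp [h]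
    have hNx : N xstar = T := by rw [hN]; simp
    have hpd : (Smat X N).PosDef := by
      refine Smat_posDef hN0 fun v hv => ?_
      refine ⟨xstar, hxstar, by rw [hNx]; exact hTpos.ne', ?_⟩
      by_contra h0
      refine hv (hker v fun x hx => ?_)
      rw [hαspec x hx, smul_dotProduct, smul_eq_mul]
      rw [h0, mul_zero]
    have hdet : IsUnit (Smat X N).det := (Matrix.isUnit_iff_isUnit_det _).mp hpd.isUnit
    refine ⟨N, hN0, hpd.isUnit, ?_, ?_⟩
    · -- constraints
      intro x hx hne
      have hx' : x = α x • xstar := hαspec x hx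
      have hxs0 : xstar ≠ 0 := by
        intro h
        exact hne (by rw [hx', h, smul_zero])
      set s : ℝ := xstar ⬝ᵥ xstar with hsdef
      have hs : 0 < s := by
        rcases (Finset.sum_nonneg fun i (_ : i ∈ Finset.univ) =>
          mul_self_nonneg (xstar i)).lt_or_eq with h | h
        · exact h
        · exact absurd (dotProduct_self_eq_zero.mp h.symm) hxs0
      have hHxs : (Smat X N).mulVec xstar = (T * s) • xstar := by
        rw [Smat_mulVec]
        rw [Finset.sum_eq_single_of_mem xstar hxstar]
        · rw [hNx]
        · intro b _ hb
          rw [hN]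
          simp [hb]
      have hTs : T * s ≠ 0 := (mul_pos hTpos hs).ne'
      have hinvxs : (Smat X N)⁻¹.mulVec xstar = (T * s)⁻¹ • xstar := by
        have h1 : (Smat X N)⁻¹.mulVec ((Smat X N).mulVec xstar) = xstar := by
          rw [Matrix.mulVec_mulVec, Matrix.nonsing_inv_mul _ hdet, Matrix.one_mulVec]
        rw [hHxs, Matrix.mulVec_smul] at h1
        have h2 : (T * s)⁻¹ • ((T * s) • (Smat X N)⁻¹.mulVec xstar)
            = (T * s)⁻¹ • xstar := by rw [h1]
        rw [smul_smul, inv_mul_cancel₀ hTs, one_smul] at h2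
        exact h2
      have h1 : x ⬝ᵥ (Smat X N)⁻¹.mulVec x = α x ^ 2 * ((T * s)⁻¹ * s) := by
        conv_lhs => rw [hx']
        rw [Matrix.mulVec_smul, hinvxs, smul_dotProduct, dotProduct_smul,
          dotProduct_smul]
        simp only [smul_eq_mul, ← hsdef]
        ring
      have h2 : (T * s)⁻¹ * s = T⁻¹ := by
        rw [mul_inv, mul_assoc, inv_mul_cancel₀ hs.ne', mul_one]
      rw [h1, h2]
      have hΔx := hΔpos x hx hne
      have hΔ2 : 0 < Δ x ^ 2 := pow_pos hΔx 2
      have hxmem : x ∈ X.erase xstar := Finset.mem_erase.mpr ⟨hne, hx⟩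
      have hterm : 2 * α x ^ 2 / Δ x ^ 2 ≤ T := by
        rw [hT]
        have ha : max 0 (2 * α x ^ 2 / Δ x ^ 2) ≤
            ∑ y ∈ X.erase xstar, max 0 (2 * (α y) ^ 2 / Δ y ^ 2) :=
          Finset.single_le_sum (f := fun y => max 0 (2 * (α y) ^ 2 / Δ y ^ 2))
            (fun y _ => le_max_left 0 _) hxmem
        have hb : 2 * α x ^ 2 / Δ x ^ 2 ≤ max 0 (2 * α x ^ 2 / Δ x ^ 2) := le_max_right 0 _
        linarith
      rw [mul_comm (α x ^ 2) T⁻¹]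
      exact aux_arith hTpos hΔ2 hterm
    · -- objective value is 0 ≤ 2c
      rw [← Finset.add_sum_erase X _ hxstar]
      have hz : ∑ x ∈ X.erase xstar, N x * Δ x = 0 :=
        Finset.sum_eq_zero fun x hx => by
          rw [hN]; simp [Finset.ne_of_mem_erase hx]
      rw [hz, hΔ0, mul_zero, add_zero]
      linarith
  · -- Case B: some arm is not a multiple of xstar; then c > 0
    push_neg at hA
    obtain ⟨x0, hx0X, hx0⟩ := hA
    have hx0ne : x0 ≠ xstar := fun h => hx0 1 (by rw [h, one_smul])
    have hx0er : x0 ∈ X.erase xstar := Finset.mem_erase.mpr ⟨hx0ne, hx0X⟩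
    set w : Fin d → ℝ := x0 - ((x0 ⬝ᵥ xstar) / (xstar ⬝ᵥ xstar)) • xstar with hw
    have hxsw : xstar ⬝ᵥ w = 0 := by
      rw [hw, dotProduct_sub, dotProduct_smul, smul_eq_mul]
      by_cases hs : xstar ⬝ᵥ xstar = 0
      · have h0 : xstar = 0 := dotProduct_self_eq_zero.mp hs
        rw [h0]
        simp [zero_dotProduct]
      · rw [dotProduct_comm xstar x0]
        field_simp
        ring
    have hw0 : w ≠ 0 := by
      intro h
      exact hx0 ((x0 ⬝ᵥ xstar) / (xstar ⬝ᵥ xstar)) (sub_eq_zero.mp (hw ▸ h))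
    have hwx0 : w ⬝ᵥ x0 = w ⬝ᵥ w := by
      have hx0w : x0 = w + ((x0 ⬝ᵥ xstar) / (xstar ⬝ᵥ xstar)) • xstar := by
        rw [hw, sub_add_cancel]
      conv_lhs => rw [hx0w]
      rw [dotProduct_add, dotProduct_smul, smul_eq_mul,
        dotProduct_comm w xstar, hxsw, mul_zero, add_zero]
    have hww : 0 < w ⬝ᵥ w := by
      rcases (Finset.sum_nonneg fun i (_ : i ∈ Finset.univ) =>
        mul_self_nonneg (w i)).lt_or_eq with h | h
      · exact h
      · exact absurd (dotProduct_self_eq_zero.mp h.symm) hw0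
    have hwx0pos : 0 < w ⬝ᵥ x0 := hwx0 ▸ hww
    set K : ℝ := ∑ x ∈ X.erase xstar, max 0 ((x ⬝ᵥ w) ^ 2 / Δ x) with hK
    have hKterm : ∀ x ∈ X.erase xstar, (x ⬝ᵥ w) ^ 2 ≤ K * Δ x := by
      intro x hx
      have hΔx := hΔpos x (Finset.mem_of_mem_erase hx) (Finset.ne_of_mem_erase hx)
      have h1 : (x ⬝ᵥ w) ^ 2 / Δ x ≤ K := by
        rw [hK]
        exact le_trans (le_max_right 0 _)
          (Finset.single_le_sum (f := fun y => max 0 ((y ⬝ᵥ w) ^ 2 / Δ y))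
            (fun y _ => le_max_left 0 _) hx)
      rw [div_le_iff₀ hΔx] at h1
      linarith
    have hK0 : 0 < K := by
      have hx0w : 0 < (x0 ⬝ᵥ w) ^ 2 / Δ x0 := by
        refine div_pos (pow_pos ?_ 2) (hΔpos x0 hx0X hx0ne)
        rw [dotProduct_comm x0 w]
        exact hwx0pos
      calc (0:ℝ) < (x0 ⬝ᵥ w) ^ 2 / Δ x0 := hx0w
        _ ≤ max 0 ((x0 ⬝ᵥ w) ^ 2 / Δ x0) := le_max_right 0 _
        _ ≤ K := hK ▸ Finset.single_le_sum (f := fun y => max 0 ((y ⬝ᵥ w) ^ 2 / Δ y))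
            (fun y _ => le_max_left 0 _) hx0er
    have hΔx0 := hΔpos x0 hx0X hx0ne
    have hKΔ : 0 < K * Δ x0 ^ 2 := mul_pos hK0 (pow_pos hΔx0 2)
    set δ : ℝ := 2 * (w ⬝ᵥ x0) ^ 2 / (K * Δ x0 ^ 2) with hδdef
    have hδ : 0 < δ := div_pos (by positivity) hKΔ
    have hlow : ∀ v ∈ S, δ ≤ v := by
      rintro v ⟨N, hN0, hUnit, hcon, rfl⟩
      have hdet : IsUnit (Smat X N).det := (Matrix.isUnit_iff_isUnit_det _).mp hUnit
      set u : Fin d → ℝ := (Smat X N)⁻¹.mulVec x0 with hu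
      have hHu : (Smat X N).mulVec u = x0 := by
        rw [hu, Matrix.mulVec_mulVec, Matrix.mul_nonsing_inv _ hdet, Matrix.one_mulVec]
      set P : ℝ := x0 ⬝ᵥ (Smat X N)⁻¹.mulVec x0 with hP
      have hPle : P ≤ Δ x0 ^ 2 / 2 := hcon x0 hx0X hx0ne
      have huHu : u ⬝ᵥ (Smat X N).mulVec u = P := by
        rw [hHu, dotProduct_comm, hP, hu]
      have hP0 : 0 ≤ P := huHu ▸ Smat_quad_nonneg hN0 u
      have hwHu : w ⬝ᵥ (Smat X N).mulVec u = w ⬝ᵥ x0 := by rw [hHu]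
      have hcs := Smat_cauchySchwarz hN0 w u
      rw [hwHu, huHu] at hcs
      set v := ∑ x ∈ X.erase xstar, N x * Δ x with hv
      have hv0 : 0 ≤ v :=
        Finset.sum_nonneg fun x hx =>
          mul_nonneg (hN0 x (Finset.mem_of_mem_erase hx))
            (hΔpos x (Finset.mem_of_mem_erase hx) (Finset.ne_of_mem_erase hx)).le
      have hsplit : w ⬝ᵥ (Smat X N).mulVec w
          = ∑ x ∈ X.erase xstar, N x * ((x ⬝ᵥ w) * (x ⬝ᵥ w)) := by
        rw [Smat_bilin, ← Finset.add_sum_erase X _ hxstar, hxsw, mul_zero, mul_zero,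
          zero_add]
      have hsum : ∑ x ∈ X.erase xstar, N x * ((x ⬝ᵥ w) * (x ⬝ᵥ w)) ≤ v * K := by
        rw [hv, Finset.sum_mul]
        refine Finset.sum_le_sum fun x hx => ?_
        have h := hKterm x hx
        have hNx := hN0 x (Finset.mem_of_mem_erase hx)
        calc N x * ((x ⬝ᵥ w) * (x ⬝ᵥ w)) = N x * (x ⬝ᵥ w) ^ 2 := by ring
          _ ≤ N x * (K * Δ x) := mul_le_mul_of_nonneg_left h hNx
          _ = N x * Δ x * K := by ring
      have h1 : (w ⬝ᵥ x0) ^ 2 ≤ (v * K) * P :=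
        le_trans hcs (mul_le_mul_of_nonneg_right (hsplit ▸ hsum) hP0)
      have h2 : (v * K) * P ≤ (v * K) * (Δ x0 ^ 2 / 2) :=
        mul_le_mul_of_nonneg_left hPle (mul_nonneg hv0 hK0.le)
      rw [hδdef, div_le_iff₀ hKΔ]
      nlinarith
    have hcδ : δ ≤ c := hc ▸ le_csInf hSne hlow
    obtain ⟨v, hvS, hvlt⟩ := exists_lt_of_csInf_lt hSne
      (show sInf S < 2 * c by rw [← hc]; linarith)
    obtain ⟨N, hN0, hUnit, hcon, rfl⟩ := hvS
    refine ⟨N, hN0, hUnit, hcon, ?_⟩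
    rw [← Finset.add_sum_erase X _ hxstar, hΔ0, mul_zero, zero_add]
    exact hvlt.le
end

section
/- Let X be a finite subset of ℝ^d that spans ℝ^d and let θ ∈ ℝ^d define a stochastic instance with unique optimal arm x*, gaps Δ_x, minimum gap Δ_min, and instance-optimal constant c(X, θ). Then c(X, θ) ≤ 48d/Δ_min. -/
open Finset
open Matrix

noncomputable def desMat {d : ℕ} {ι : Type*} [Fintype ι] (w : ι → (Fin d → ℝ))
    (p : ι → ℝ) : Matrix (Fin d) (Fin d) ℝ :=
  ∑ i, p i • Matrix.vecMulVec (w i) (w i)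

lemma desMat_apply {d : ℕ} {ι : Type*} [Fintype ι] (w : ι → (Fin d → ℝ))
    (p : ι → ℝ) (a b : Fin d) : desMat w p a b = ∑ i, p i * (w i a * w i b) := by
  simp [desMat, Matrix.sum_apply, Matrix.vecMulVec_apply]

lemma vecMulVec_mulVec' {d : ℕ} (a b u : Fin d → ℝ) :
    (Matrix.vecMulVec a b) *ᵥ u = (dotProduct b u) • a := by
  ext x
  simp only [Matrix.mulVec, dotProduct, Matrix.vecMulVec_apply, Pi.smul_apply,
    smul_eq_mul, Finset.sum_mul, Finset.mul_sum]
  exact Finset.sum_congr rfl fun j _ => by ring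

lemma desMat_quadForm {d : ℕ} {ι : Type*} [Fintype ι] (w : ι → (Fin d → ℝ))
    (p : ι → ℝ) (u : Fin d → ℝ) :
    dotProduct u ((desMat w p) *ᵥ u) = ∑ i, p i * (dotProduct (w i) u)^2 := by
  classical
  rw [desMat]
  induction (Finset.univ : Finset ι) using Finset.induction_on with
  | empty => simp
  | insert _ _ h ih =>
    rw [Finset.sum_insert h, Finset.sum_insert h, Matrix.add_mulVec,
      dotProduct_add, ih, smul_mulVec, vecMulVec_mulVec',
      dotProduct_smul, dotProduct_smul]
    simp only [smul_eq_mul, dotProduct_comm u]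
    ring

lemma desMat_isHermitian {d : ℕ} {ι : Type*} [Fintype ι] (w : ι → (Fin d → ℝ))
    (p : ι → ℝ) : (desMat w p).IsHermitian := by
  ext a b
  simp only [Matrix.conjTranspose_apply, desMat_apply, star_trivial]
  exact Finset.sum_congr rfl fun i _ => by ring

lemma desMat_posDef {d : ℕ} {ι : Type*} [Fintype ι] {w : ι → (Fin d → ℝ)}
    (hspan : ∀ u : Fin d → ℝ, (∀ i, dotProduct (w i) u = 0) → u = 0)
    {p : ι → ℝ} (hp : ∀ i, 0 < p i) : (desMat w p).PosDef := by
  refine Matrix.posDef_iff_dotProduct_mulVec.mpr ⟨desMat_isHermitian w p, fun u hu => ?_⟩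
  have hstar : star u = u := by
    funext i; simp
  rw [hstar, desMat_quadForm]
  have : ∃ i, dotProduct (w i) u ≠ 0 := by
    by_contra h
    push_neg at h
    exact hu (hspan u h)
  obtain ⟨i0, hi0⟩ := this
  refine Finset.sum_pos' (fun i _ => mul_nonneg (hp i).le (sq_nonneg _)) 
    ⟨i0, Finset.mem_univ _, mul_pos (hp i0) (by positivity)⟩

lemma desMat_det_continuous {d : ℕ} {ι : Type*} [Fintype ι] (w : ι → (Fin d → ℝ)) :
    Continuous fun p : ι → ℝ => (desMat w p).det := by
  refine Continuous.matrix_det (continuous_matrix fun a b => ?_)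
  simp only [desMat_apply]
  exact continuous_finset_sum _ fun i _ => (continuous_apply i).mul continuous_const

lemma smul_vecMulVec' {d : ℕ} (c : ℝ) (a b : Fin d → ℝ) :
    Matrix.vecMulVec (c • a) b = c • Matrix.vecMulVec a b := by
  ext i j
  simp [Matrix.vecMulVec_apply, mul_assoc]

lemma desMat_combo {d : ℕ} {ι : Type*} [Fintype ι] (w : ι → (Fin d → ℝ))
    (p q : ι → ℝ) (a b : ℝ) :
    desMat w (fun j => a * p j + b * q j) = a • desMat w p + b • desMat w q := by
  ext x y
  simp only [desMat_apply, Matrix.add_apply, Matrix.smul_apply, smul_eq_mul,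
    Finset.mul_sum, ← Finset.sum_add_distrib]
  exact Finset.sum_congr rfl fun i _ => by ring

lemma desMat_single {d : ℕ} {ι : Type*} [Fintype ι] [DecidableEq ι]
    (w : ι → (Fin d → ℝ)) (i : ι) :
    desMat w (fun j => if j = i then (1:ℝ) else 0) = Matrix.vecMulVec (w i) (w i) := by
  ext x y
  simp [desMat_apply, Matrix.vecMulVec_apply, ite_mul]

theorem kiefer_wolfowitz {d : ℕ} (hd : 1 ≤ d) {ι : Type*} [Fintype ι] [Nonempty ι]
    (w : ι → (Fin d → ℝ))
    (hspan : ∀ u : Fin d → ℝ, (∀ i, dotProduct (w i) u = 0) → u = 0) :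
    ∃ p : ι → ℝ, (∀ i, 0 ≤ p i) ∧ (∑ i, p i = 1) ∧ (desMat w p).det ≠ 0 ∧
      ∀ i, dotProduct (w i) ((desMat w p)⁻¹ *ᵥ (w i)) ≤ d := by
  classical
  -- uniform point
  set n : ℕ := Fintype.card ι with hn
  have hnpos : 0 < n := Fintype.card_pos
  set u0 : ι → ℝ := fun _ => (n : ℝ)⁻¹ with hu0
  have hu0mem : u0 ∈ stdSimplex ℝ ι := by
    constructor
    · intro x; positivity
    · rw [hu0]
      rw [Finset.sum_const, Finset.card_univ, ← hn, nsmul_eq_mul]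
      field_simp
  have hu0det : 0 < (desMat w u0).det :=
    (desMat_posDef hspan (fun i => by positivity)).det_pos
  obtain ⟨p, hpS, hmax⟩ := (isCompact_stdSimplex ℝ ι).exists_isMaxOn ⟨u0, hu0mem⟩
    ((desMat_det_continuous w).continuousOn)
  have hdetpos : 0 < (desMat w p).det := lt_of_lt_of_le hu0det (hmax hu0mem)
  have hunit : IsUnit (desMat w p).det := hdetpos.ne'.isUnit
  refine ⟨p, hpS.1, hpS.2, hdetpos.ne', fun i => ?_⟩
  set H := desMat w p with hH
  set y := w i with hy
  set s := dotProduct y (H⁻¹ *ᵥ y) with hs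
  show s ≤ (d : ℝ)
  -- key inequality for every t ∈ (0,1)
  have key : ∀ t : ℝ, 0 < t → t < 1 →
      (1 - t) ^ (d - 1) * ((1 - t) + t * s) ≤ 1 := by
    intro t ht0 ht1
    set q : ι → ℝ := fun j => (1 - t) * p j + t * (if j = i then 1 else 0) with hq
    have hqmem : q ∈ stdSimplex ℝ ι := by
      constructor
      · intro x
        have := hpS.1 x
        dsimp [q]
        have : (0:ℝ) ≤ if x = i then (1:ℝ) else 0 := by positivity
        nlinarith [hpS.1 x]
      · simp only [q, Finset.sum_add_distrib, ← Finset.mul_sum, hpS.2,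
          Finset.sum_ite_eq' Finset.univ i fun _ => (1:ℝ), Finset.mem_univ, if_pos]
        ring
    have hdq : desMat w q = (1 - t) • H + t • Matrix.vecMulVec y y := by
      rw [hq]
      rw [desMat_combo w p _ (1-t) t, desMat_single]
    have hle : (desMat w q).det ≤ H.det := hmax hqmem
    -- compute the determinant
    have hfactor : (1 - t) • H + t • Matrix.vecMulVec y y
        = (1 - t) • (H + Matrix.vecMulVec ((t / (1 - t)) • y) y) := by
      have hne : (1:ℝ) - t ≠ 0 := by linarith
      have hcc : (1 - t) * (t / (1 - t)) = t := by
        rw [mul_comm, div_mul_cancel₀ _ hne]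
      rw [smul_vecMulVec', smul_add, smul_smul, hcc]
    have hdet2 : (H + Matrix.vecMulVec ((t / (1 - t)) • y) y).det
        = H.det * (1 + (t / (1 - t)) * s) := by
      rw [Matrix.vecMulVec_eq Unit, Matrix.det_add_replicateCol_mul_replicateRow hunit]
      congr 1
      rw [Matrix.det_unique]
      simp only [Matrix.add_apply, Matrix.one_apply_eq]
      congr 1
      have hrc : ∀ u : Fin d → ℝ, (Matrix.replicateRow Unit y * H⁻¹ * Matrix.replicateCol Unit u) default default
          = dotProduct (Matrix.vecMul y H⁻¹) u := fun u => by
        simp [Matrix.mul_apply, Matrix.replicateRow, Matrix.replicateCol, Matrix.vecMul, dotProduct,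
          Finset.sum_mul]
      rw [hrc]
      rw [dotProduct_smul, ← Matrix.dotProduct_mulVec]
      simp [hs, smul_eq_mul]
    have hcalc : (desMat w q).det = (1 - t) ^ d * (H.det * (1 + t / (1 - t) * s)) := by
      rw [hdq, hfactor, Matrix.det_smul, hdet2]
      simp [Fintype.card_fin]
    have h1t : (0:ℝ) < 1 - t := by linarith
    have hred : (1 - t) ^ d * (1 + t / (1 - t) * s) ≤ 1 := by
      rw [hcalc] at hle
      nlinarith [hdetpos]
    have hpowsplit : (1 - t) ^ d = (1 - t) ^ (d - 1) * (1 - t) := by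
      conv_lhs => rw [show d = (d - 1) + 1 from (Nat.succ_pred_eq_of_pos hd).symm]
      rw [pow_succ]
    calc (1 - t) ^ (d - 1) * ((1 - t) + t * s)
        = (1 - t) ^ d * (1 + t / (1 - t) * s) := by
          rw [hpowsplit]
          field_simp
      _ ≤ 1 := hred
  -- conclude s ≤ d
  by_contra hcon
  push_neg at hcon
  have hd1 : (1:ℝ) ≤ (d:ℝ) := by exact_mod_cast hd
  have hs1 : 1 < s := lt_of_le_of_lt hd1 hcon
  have key2 : ∀ t : ℝ, 0 < t → t < 1 → s - d ≤ ((d:ℝ) - 1) * (s - 1) * t := by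
    intro t ht0 ht1
    have hb : 1 - ((d:ℝ) - 1) * t ≤ (1 - t) ^ (d - 1) := by
      have hber := one_add_mul_le_pow (a := -t) (by linarith) (d - 1)
      have hcast : ((d - 1 : ℕ) : ℝ) = (d:ℝ) - 1 := by
        rw [Nat.cast_sub hd]; norm_num
      rw [hcast] at hber
      have : (1:ℝ) + -t = 1 - t := by ring
      rw [this] at hber
      linarith
    have hP : (0:ℝ) ≤ (1 - t) + t * s := by nlinarith
    have h2 : (1 - ((d:ℝ) - 1) * t) * ((1 - t) + t * s) ≤ 1 :=
      le_trans (mul_le_mul_of_nonneg_right hb hP) (key t ht0 ht1)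
    nlinarith [h2, ht0, mul_pos ht0 ht0]
  set C := ((d:ℝ) - 1) * (s - 1) with hC
  have hC0 : 0 ≤ C := mul_nonneg (by linarith) (by linarith)
  have hsd : 0 < s - d := by linarith
  set t0 := min (1/2 : ℝ) ((s - d) / (2 * (C + 1))) with ht0def
  have ht00 : 0 < t0 := lt_min (by norm_num) (by positivity)
  have ht01 : t0 < 1 := lt_of_le_of_lt (min_le_left _ _) (by norm_num)
  have hk := key2 t0 ht00 ht01
  have hle2 : t0 ≤ (s - d) / (2 * (C + 1)) := min_le_right _ _
  have h2 : C * t0 ≤ (C + 1) * ((s - d) / (2 * (C + 1))) := by nlinarith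
  have h3 : (C + 1) * ((s - d) / (2 * (C + 1))) = (s - d) / 2 := by
    have : C + 1 ≠ 0 := by linarith
    field_simp
  rw [h3] at h2
  linarith

lemma vecMulVec_smul'' {d : ℕ} (c : ℝ) (a b : Fin d → ℝ) :
    Matrix.vecMulVec a (c • b) = c • Matrix.vecMulVec a b := by
  ext i j
  simp [Matrix.vecMulVec_apply]
  ring



/-- the instance-optimal constant satisfies `c(X, θ) ≤ 48·d/Δ_min`. -/
theorem instance_optimal_constant_le {d : ℕ} (X : Finset (Fin d → ℝ))
    (hspan : Submodule.span ℝ (↑X : Set (Fin d → ℝ)) = ⊤)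
    (θ : Fin d → ℝ) (xstar : Fin d → ℝ) (hxstar : xstar ∈ X)
    (hopt : ∀ x ∈ X, x ≠ xstar → dotProduct xstar θ < dotProduct x θ)
    (Δ : (Fin d → ℝ) → ℝ) (hΔdef : ∀ x, Δ x = dotProduct (x - xstar) θ)
    (Δmin : ℝ) (hΔmin_le : ∀ x ∈ X, x ≠ xstar → Δmin ≤ Δ x)
    (hΔmin_mem : ∃ x ∈ X, x ≠ xstar ∧ Δ x = Δmin)
    (c : ℝ) (hc : c = sInf (lowerBoundObjValues X xstar Δ)) :
    c ≤ 48 * d / Δmin := by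
  classical
  obtain ⟨x0, hx0X, hx0ne, hx0eq⟩ := hΔmin_mem
  have hd : 1 ≤ d := by
    by_contra h
    push_neg at h
    have hd0 : d = 0 := by omega
    subst hd0
    exact hx0ne (funext fun i => absurd i.2 (by omega))
  have hΔpos : ∀ x ∈ X, x ≠ xstar → 0 < Δ x := by
    intro x hx hne
    rw [hΔdef, sub_dotProduct]
    have := hopt x hx hne
    linarith
  have hΔminpos : 0 < Δmin := hx0eq ▸ hΔpos x0 hx0X hx0ne
  -- rescaled arms
  set ι := {x : Fin d → ℝ // x ∈ X} with hι
  haveI : Nonempty ι := ⟨⟨xstar, hxstar⟩⟩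
  set Δ' : ι → ℝ := fun i => if (i : Fin d → ℝ) = xstar then 1 else Δ i with hΔ'
  have hΔ'pos : ∀ i : ι, 0 < Δ' i := by
    intro i
    by_cases hix : (i : Fin d → ℝ) = xstar
    · simp [hΔ', hix]
    · simpa [hΔ', hix] using hΔpos i i.2 hix
  set w : ι → (Fin d → ℝ) := fun i => (Δ' i)⁻¹ • (i : Fin d → ℝ) with hw
  have hspanw : ∀ u : Fin d → ℝ, (∀ i, dotProduct (w i) u = 0) → u = 0 := by
    intro u hu
    have hXu : ∀ x ∈ X, dotProduct x u = 0 := by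
      intro x hx
      have := hu ⟨x, hx⟩
      rw [hw] at this
      simp only [smul_dotProduct, smul_eq_mul] at this
      rcases mul_eq_zero.mp this with h | h
      · exact absurd h (inv_ne_zero (hΔ'pos ⟨x, hx⟩).ne')
      · exact h
    let φ : (Fin d → ℝ) →ₗ[ℝ] ℝ :=
      { toFun := fun v => dotProduct v u
        map_add' := fun a b => add_dotProduct a b u
        map_smul' := fun r a => smul_dotProduct r a u }
    have hker : (↑X : Set (Fin d → ℝ)) ⊆ (LinearMap.ker φ : Set (Fin d → ℝ)) := by
      intro x hx
      exact hXu x hx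
    have : Submodule.span ℝ (↑X : Set (Fin d → ℝ)) ≤ LinearMap.ker φ :=
      Submodule.span_le.mpr hker
    rw [hspan, top_le_iff] at this
    have hmemker : u ∈ LinearMap.ker φ := by rw [this]; exact Submodule.mem_top
    exact dotProduct_self_eq_zero.mp (LinearMap.mem_ker.mp hmemker)
  obtain ⟨p, hp0, hp1, hpdet, hpKW⟩ := kiefer_wolfowitz hd w hspanw
  set H := desMat w p with hHdef
  have hHunit : IsUnit H.det := isUnit_iff_ne_zero.mpr hpdet
  set N : (Fin d → ℝ) → ℝ :=
    fun x => if hx : x ∈ X then (2 * d) * p ⟨x, hx⟩ / (Δ' ⟨x, hx⟩) ^ 2 else 0 with hN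
  have hNval : ∀ i : ι, N ↑i = (2 * d) * p i / (Δ' i) ^ 2 := by
    intro i
    rw [hN]
    simp only [i.2, dif_pos, Subtype.coe_eta]
  have hterm : ∀ i : ι, N ↑i • Matrix.vecMulVec (↑i : Fin d → ℝ) ↑i
      = (2 * (d:ℝ)) • (p i • Matrix.vecMulVec (w i) (w i)) := by
    intro i
    rw [hw]
    simp only [smul_vecMulVec', vecMulVec_smul'', smul_smul, hNval i]
    congr 1
    rw [div_eq_mul_inv, sq, mul_inv]
    ring
  have hSmat : Smat X N = (2 * (d:ℝ)) • H := by
    rw [Smat, hHdef, desMat, Finset.smul_sum,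
      ← Finset.sum_coe_sort X (fun x => N x • Matrix.vecMulVec x x)]
    exact Finset.sum_congr rfl fun i _ => hterm i
  have hdne : (2 * (d:ℝ)) ≠ 0 := by
    have : (1:ℝ) ≤ (d:ℝ) := by exact_mod_cast hd
    linarith
  have hSunit : IsUnit (Smat X N) := by
    rw [Matrix.isUnit_iff_isUnit_det, hSmat, Matrix.det_smul, isUnit_iff_ne_zero]
    exact mul_ne_zero (pow_ne_zero _ hdne) hpdet
  have hSinv : (Smat X N)⁻¹ = (2 * (d:ℝ))⁻¹ • H⁻¹ := by
    apply Matrix.inv_eq_right_inv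
    rw [hSmat, Matrix.smul_mul, Matrix.mul_smul, smul_smul,
      mul_inv_cancel₀ hdne, Matrix.mul_nonsing_inv _ hHunit, one_smul]
  -- constraint verification
  have hconstr : ∀ x ∈ X, x ≠ xstar →
      dotProduct x ((Smat X N)⁻¹.mulVec x) ≤ Δ x ^ 2 / 2 := by
    intro x hx hne
    set i : ι := ⟨x, hx⟩ with hi
    have hΔ'i : Δ' i = Δ x := by simp [hΔ', hi, hne]
    have hxw : x = Δ x • w i := by
      rw [hw]
      simp only [smul_smul, hΔ'i]
      rw [mul_inv_cancel₀ (hΔpos x hx hne).ne', one_smul]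
    have hs := hpKW i
    calc dotProduct x ((Smat X N)⁻¹.mulVec x)
        = Δ x * (Δ x * ((2 * (d:ℝ))⁻¹ *
            dotProduct (w i) (H⁻¹ *ᵥ (w i)))) := by
          rw [hSinv]
          conv_lhs => rw [hxw]
          rw [Matrix.mulVec_smul, Matrix.smul_mulVec,
            smul_dotProduct, dotProduct_smul, dotProduct_smul]
          first
          | (simp only [smul_eq_mul]; ring)
          | simp only [smul_eq_mul]
      _ ≤ Δ x * (Δ x * ((2 * (d:ℝ))⁻¹ * d)) := by
          have h2 : (0:ℝ) ≤ (2 * (d:ℝ))⁻¹ := by positivity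
          have hΔx := (hΔpos x hx hne).le
          nlinarith [hpKW i, mul_le_mul_of_nonneg_left (hpKW i) h2,
            sq_nonneg (Δ x)]
      _ = Δ x ^ 2 / 2 := by
          have hdR : (d:ℝ) ≠ 0 := Nat.cast_ne_zero.mpr (by omega)
          first
          | (field_simp; ring)
          | field_simp
  -- the objective value
  set V : ℝ := ∑ x ∈ X.erase xstar, N x * Δ x with hV
  have hmem : V ∈ lowerBoundObjValues X xstar Δ := by
    refine ⟨N, ?_, hSunit, hconstr, rfl⟩
    intro x hx
    rw [hN]
    simp only [hx, dif_pos]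
    have := hp0 ⟨x, hx⟩
    have := (hΔ'pos ⟨x, hx⟩)
    positivity
  -- bounding the value
  set g : (Fin d → ℝ) → ℝ :=
    fun x => if hx : x ∈ X then (2 * d / Δmin) * p ⟨x, hx⟩ else 0 with hg
  have hVle : V ≤ 2 * d / Δmin := by
    have hstep1 : V ≤ ∑ x ∈ X.erase xstar, g x := by
      apply Finset.sum_le_sum
      intro x hxe
      have hx : x ∈ X := Finset.mem_of_mem_erase hxe
      have hne : x ≠ xstar := Finset.ne_of_mem_erase hxe
      have hΔ'i : Δ' ⟨x, hx⟩ = Δ x := by simp [hΔ', hne]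
      rw [hN, hg]
      simp only [hx, dif_pos, hΔ'i]
      have hΔx := hΔpos x hx hne
      have hp := hp0 ⟨x, hx⟩
      have hmin := hΔmin_le x hx hne
      have hA : (0:ℝ) ≤ 2 * (d:ℝ) * p ⟨x, hx⟩ := mul_nonneg (by positivity) hp
      have hΔne := hΔx.ne'
      have e1 : 2 * (d:ℝ) * p ⟨x, hx⟩ / Δ x ^ 2 * Δ x
          = 2 * (d:ℝ) * p ⟨x, hx⟩ / Δ x := by
        first
        | (field_simp; ring)
        | field_simp
      have e2 : 2 * (d:ℝ) / Δmin * p ⟨x, hx⟩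
          = 2 * (d:ℝ) * p ⟨x, hx⟩ / Δmin := by ring
      rw [e1, e2]
      gcongr <;> first | exact hA | exact hΔminpos | exact hmin
    have hstep2 : ∑ x ∈ X.erase xstar, g x ≤ ∑ x ∈ X, g x := by
      apply Finset.sum_le_sum_of_subset_of_nonneg (Finset.erase_subset _ _)
      intro x hx _
      rw [hg]
      by_cases hxX : x ∈ X
      · simp only [hxX, dif_pos]
        have := hp0 ⟨x, hxX⟩
        positivity
      · simp [hxX]
    have hstep3 : ∑ x ∈ X, g x = 2 * d / Δmin := by
      rw [← Finset.sum_coe_sort X g]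
      have : ∀ i : ι, g ↑i = (2 * d / Δmin) * p i := by
        intro i
        rw [hg]
        simp only [i.2, dif_pos, Subtype.coe_eta]
      rw [Finset.sum_congr rfl fun i _ => this i, ← Finset.mul_sum, hp1, mul_one]
    linarith
  have hbdd : BddBelow (lowerBoundObjValues X xstar Δ) := by
    refine ⟨0, fun v hv => ?_⟩
    obtain ⟨N', hN'0, _, _, hveq⟩ := hv
    rw [hveq]
    apply Finset.sum_nonneg
    intro x hxe
    have hx : x ∈ X := Finset.mem_of_mem_erase hxe
    have hne : x ≠ xstar := Finset.ne_of_mem_erase hxe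
    exact mul_nonneg (hN'0 x hx) (hΔpos x hx hne).le
  rw [hc]
  calc sInf (lowerBoundObjValues X xstar Δ) ≤ V := csInf_le hbdd hmem
    _ ≤ 2 * d / Δmin := hVle
    _ ≤ 48 * d / Δmin := by
      gcongr
      nlinarith [Nat.cast_nonneg (α := ℝ) d]
end
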